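/- Correctness of parent identification (Proposition 5.2 and dimension formula (*)). Let G be a DAG on [d], let H ∈ ℝ^{d×n} (n ≥ d) have full row rank with rows h_1,…,h_d, and let {B_k}_{k∈[K]} be a family of d×d real matrices with (B_k)_{ij} ≠ 0 ⟺ j ∈ \bar{pa}_G(i) that is node-level non-degenerate with respect to G. Set M_k = B_k H. Let S = {s_1,…,s_m} ⊆ [d] be an ordered ancestral set such that every prefix {s_1,…,s_{m′}} (0 ≤ m′ ≤ m) is ancestral, and let i ∉ S satisfy pa_G(i) ⊆ S. For 0 ≤ m′ ≤ m define r_{m′} = dim span{ proj_{W_{k,m′}^⊥}((M_k)_i) : k ∈ [K] }, where W_{k,m′} = span{(M_k)_{s_j} : 1 ≤ j ≤ m′} ⊆ ℝ^n and proj denotes orthogonal projection in ℝ^n. Then (*) r_{m′} = |\bar{pa}_G(i) ∖ {s_1,…,s_{m′}}| for every 0 ≤ m′ ≤ m; consequently, for every 1 ≤ m′ ≤ m, s_{m′} ∈ pa_G(i) if and only if r_{m′} = r_{m′−1} − 1, so the set {s_{m′} : 1 ≤ m′ ≤ m, r_{m′} = r_{m′−1} − 1} equals pa_G(i). -/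

import Mathlib

open Matrix MeasureTheory

/-- `E i j` means there is a directed edge `i → j`. A DAG has no directed cycles. -/
def IsDAG {d : ℕ} (E : Fin d → Fin d → Prop) : Prop :=
  ∀ i, ¬ Relation.TransGen E i i

/-- The set of parents of `i`. -/
def pa {d : ℕ} (E : Fin d → Fin d → Prop) (i : Fin d) : Set (Fin d) := {j | E j i}

/-- The set of children of `i`. -/
def ch {d : ℕ} (E : Fin d → Fin d → Prop) (i : Fin d) : Set (Fin d) := {j | E i j}

/-- `pa_G(i) ∪ {i}`. -/
def barPa {d : ℕ} (E : Fin d → Fin d → Prop) (i : Fin d) : Set (Fin d) := insert i (pa E i)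

/-- `ch_G(i) ∪ {i}`. -/
def barCh {d : ℕ} (E : Fin d → Fin d → Prop) (i : Fin d) : Set (Fin d) := insert i (ch E i)

/-- The effect-domination set `dom_G(i) = {j ∈ pa_G(i) : ch_G(i) ⊆ ch_G(j)}`. -/
def domSet {d : ℕ} (E : Fin d → Fin d → Prop) (i : Fin d) : Set (Fin d) :=
  {j | j ∈ pa E i ∧ ch E i ⊆ ch E j}

/-- `dom_G(i) ∪ {i}`. -/
def barDom {d : ℕ} (E : Fin d → Fin d → Prop) (i : Fin d) : Set (Fin d) :=
  insert i (domSet E i)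

/-- Ancestors of `i`: nodes with a directed path to `i`. -/
def ans {d : ℕ} (E : Fin d → Fin d → Prop) (i : Fin d) : Set (Fin d) :=
  {j | Relation.TransGen E j i}

/-- A set is ancestral if it is closed under taking ancestors. -/
def Ancestral {d : ℕ} (E : Fin d → Fin d → Prop) (S : Set (Fin d)) : Prop :=
  ∀ j ∈ S, ans E j ⊆ S

/-- The support of `B` matches the graph: `B i j ≠ 0 ↔ j ∈ \bar{pa}_G(i)`. -/
def SupportMatches {d : ℕ} (E : Fin d → Fin d → Prop) (B : Matrix (Fin d) (Fin d) ℝ) : Prop :=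
  ∀ i j, B i j ≠ 0 ↔ j ∈ barPa E i

/-- Node-level non-degeneracy: for every node `i`, the span of the `i`-th rows
`(B_k)_i` has dimension `|pa_G(i)| + 1`. -/
def NodeNonDegenerate {d K : ℕ} (E : Fin d → Fin d → Prop)
    (B : Fin K → Matrix (Fin d) (Fin d) ℝ) : Prop :=
  ∀ i, Module.finrank ℝ (Submodule.span ℝ (Set.range fun k => B k i)) = (pa E i).ncard + 1

/-- View a row vector in `ℝ^n` as an element of Euclidean space. -/
noncomputable def toE {n : ℕ} (v : Fin n → ℝ) : EuclideanSpace ℝ (Fin n) :=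
  (WithLp.equiv 2 (Fin n → ℝ)).symm v

/-- Orthogonal projection of `v` onto the orthogonal complement `W^⊥`. -/
noncomputable def projPerp {n : ℕ} (W : Submodule ℝ (EuclideanSpace ℝ (Fin n)))
    (v : EuclideanSpace ℝ (Fin n)) : EuclideanSpace ℝ (Fin n) :=
  (Submodule.orthogonalProjectionOnto Wᗮ v : EuclideanSpace ℝ (Fin n))

/-- The prefix `{s_1, …, s_{m'}}` of the ordered set `S`. -/
def prefixSet {d m : ℕ} (s : Fin m → Fin d) (m' : ℕ) : Set (Fin d) :=
  {x | ∃ j : Fin m, (j : ℕ) < m' ∧ s j = x}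

/-! ### Auxiliary lemmas -/

/-- `toE` as a linear map. -/
noncomputable def toEL (n : ℕ) : (Fin n → ℝ) →ₗ[ℝ] EuclideanSpace ℝ (Fin n) :=
  (WithLp.linearEquiv 2 ℝ (Fin n → ℝ)).symm.toLinearMap

lemma row_eq {d n : ℕ} (B : Matrix (Fin d) (Fin d) ℝ) (H : Matrix (Fin d) (Fin n) ℝ) (x : Fin d) :
    toE ((B * H) x) = ∑ j : Fin d, B x j • toE (H j) := by
  have h1 : (B * H) x = ∑ j : Fin d, B x j • H j := by
    funext a
    simp [Matrix.mul_apply, Finset.sum_apply]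
  show toEL n ((B * H) x) = _
  rw [h1, map_sum]
  simp only [_root_.map_smul]
  rfl

lemma rows_li {d n : ℕ} (H : Matrix (Fin d) (Fin n) ℝ) (hH : H.rank = d) :
    LinearIndependent ℝ (fun x : Fin d => toE (H x)) := by
  have h0 : LinearIndependent ℝ (fun x : Fin d => H x) := by
    rw [linearIndependent_iff_card_eq_finrank_span, Set.finrank,
      show (Set.range fun x : Fin d => H x) = Set.range H.row from rfl,
      ← Matrix.rank_eq_finrank_span_row, hH, Fintype.card_fin]
  exact h0.map' (toEL n) (LinearEquiv.ker _)

lemma prefixSet_zero {d m : ℕ} (s : Fin m → Fin d) : prefixSet s 0 = ∅ := by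
  ext x; simp [prefixSet]

lemma prefixSet_succ {d m : ℕ} (s : Fin m → Fin d) {m' : ℕ} (h : m' < m) :
    prefixSet s (m' + 1) = insert (s ⟨m', h⟩) (prefixSet s m') := by
  ext x
  simp only [prefixSet, Set.mem_setOf_eq, Set.mem_insert_iff]
  constructor
  · rintro ⟨j, hj, rfl⟩
    rcases Nat.lt_succ_iff_lt_or_eq.mp hj with hj' | hj'
    · exact Or.inr ⟨j, hj', rfl⟩
    · exact Or.inl (by congr 1; exact Fin.ext hj')
  · rintro (rfl | ⟨j, hj, rfl⟩)
    · exact ⟨⟨m', h⟩, Nat.lt_succ_self _, rfl⟩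
    · exact ⟨j, Nat.lt_succ_of_lt hj, rfl⟩

lemma pa_prefix_subset {d m : ℕ} {E : Fin d → Fin d → Prop} (hG : IsDAG E)
    {s : Fin m → Fin d}
    (hanc : ∀ m' : ℕ, m' ≤ m → Ancestral E (prefixSet s m'))
    {m' : ℕ} (hlt : m' < m) :
    pa E (s ⟨m', hlt⟩) ⊆ prefixSet s m' := by
  intro x hx
  have hx' : x ∈ prefixSet s (m' + 1) := by
    apply hanc (m' + 1) hlt (s ⟨m', hlt⟩) ⟨⟨m', hlt⟩, Nat.lt_succ_self _, rfl⟩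
    exact Relation.TransGen.single hx
  obtain ⟨j, hj, rfl⟩ := hx'
  rcases Nat.lt_succ_iff_lt_or_eq.mp hj with hj' | hj'
  · exact ⟨j, hj', rfl⟩
  · exfalso
    have hje : j = ⟨m', hlt⟩ := Fin.ext hj'
    subst hje
    exact hG _ (Relation.TransGen.single hx)

lemma span_prefix_eq {d n m : ℕ}
    {E : Fin d → Fin d → Prop} (hG : IsDAG E)
    (H : Matrix (Fin d) (Fin n) ℝ)
    {Bk : Matrix (Fin d) (Fin d) ℝ} (hsupp : SupportMatches E Bk)
    {s : Fin m → Fin d}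
    (hanc : ∀ m' : ℕ, m' ≤ m → Ancestral E (prefixSet s m')) :
    ∀ m' : ℕ, m' ≤ m →
      Submodule.span ℝ ((fun x => toE ((Bk * H) x)) '' prefixSet s m')
        = Submodule.span ℝ ((fun x => toE (H x)) '' prefixSet s m') := by
  intro m'
  induction m' with
  | zero => intro _; simp [prefixSet_zero]
  | succ m' ih =>
    intro hle
    have hlt : m' < m := hle
    rw [prefixSet_succ s hlt, Set.image_insert_eq, Set.image_insert_eq,
        Submodule.span_insert, Submodule.span_insert, ih (le_of_lt hlt)]
    set t := s ⟨m', hlt⟩ with ht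
    set V := Submodule.span ℝ ((fun x => toE (H x)) '' prefixSet s m') with hV
    have hc : Bk t t ≠ 0 := (hsupp t t).mpr (Or.inl rfl)
    have hw : toE ((Bk * H) t) - Bk t t • toE (H t) ∈ V := by
      rw [row_eq]
      have hsum : (∑ j : Fin d, Bk t j • toE (H j)) - Bk t t • toE (H t)
          = ∑ j ∈ Finset.univ.erase t, Bk t j • toE (H j) := by
        rw [← Finset.sum_erase_add Finset.univ _ (Finset.mem_univ t), add_sub_cancel_right]
      rw [hsum]
      apply Submodule.sum_mem
      intro j hj
      by_cases hb : Bk t j = 0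
      · rw [hb, zero_smul]; exact Submodule.zero_mem _
      · have hjt : j ≠ t := (Finset.mem_erase.mp hj).1
        have hjpa : j ∈ pa E t := by
          rcases (hsupp t j).mp hb with h | h
          · exact absurd h hjt
          · exact h
        have hjP : j ∈ prefixSet s m' := pa_prefix_subset hG hanc hlt hjpa
        exact Submodule.smul_mem _ _ (Submodule.subset_span ⟨j, hjP, rfl⟩)
    apply le_antisymm
    · apply sup_le
      · rw [Submodule.span_singleton_le_iff_mem]
        have he : toE ((Bk * H) t)
            = Bk t t • toE (H t) + (toE ((Bk * H) t) - Bk t t • toE (H t)) := by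
          rw [add_sub_cancel]
        rw [he]
        exact Submodule.add_mem _
          (Submodule.mem_sup_left (Submodule.smul_mem _ _ (Submodule.mem_span_singleton_self _)))
          (Submodule.mem_sup_right hw)
      · exact le_sup_right
    · apply sup_le
      · rw [Submodule.span_singleton_le_iff_mem]
        have he : toE (H t) = (Bk t t)⁻¹ • toE ((Bk * H) t)
            - (Bk t t)⁻¹ • (toE ((Bk * H) t) - Bk t t • toE (H t)) := by
          rw [← smul_sub, sub_sub_cancel, smul_smul, inv_mul_cancel₀ hc, one_smul]
        rw [he]
        exact Submodule.sub_mem _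
          (Submodule.mem_sup_left (Submodule.smul_mem _ _ (Submodule.mem_span_singleton_self _)))
          (Submodule.mem_sup_right (Submodule.smul_mem _ _ hw))
      · exact le_sup_right

lemma rank_formula {d n K m : ℕ}
    {E : Fin d → Fin d → Prop} (hG : IsDAG E)
    {H : Matrix (Fin d) (Fin n) ℝ} (hH : H.rank = d)
    {B : Fin K → Matrix (Fin d) (Fin d) ℝ}
    (hsupp : ∀ k, SupportMatches E (B k))
    (hnd : NodeNonDegenerate E B)
    {s : Fin m → Fin d}
    (hanc : ∀ m' : ℕ, m' ≤ m → Ancestral E (prefixSet s m'))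
    {i : Fin d} (hii : i ∉ pa E i)
    {m' : ℕ} (hm' : m' ≤ m) :
    Module.finrank ℝ (Submodule.span ℝ (Set.range fun k : Fin K =>
        projPerp (Submodule.span ℝ ((fun x => toE ((B k * H) x)) '' prefixSet s m'))
          (toE ((B k * H) i)))) = (barPa E i \ prefixSet s m').ncard := by
  classical
  set P := prefixSet s m' with hP
  set V := Submodule.span ℝ ((fun x : Fin d => toE (H x)) '' P) with hVdef
  set πL : EuclideanSpace ℝ (Fin n) →ₗ[ℝ] EuclideanSpace ℝ (Fin n) :=
    Vᗮ.subtype ∘ₗ (Submodule.orthogonalProjectionOnto Vᗮ).toLinearMap with hπdef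
  have hre : (fun k : Fin K =>
      projPerp (Submodule.span ℝ ((fun x => toE ((B k * H) x)) '' P)) (toE ((B k * H) i)))
      = fun k => πL (toE ((B k * H) i)) := by
    funext k
    rw [span_prefix_eq hG H (hsupp k) hanc m' hm']
    rfl
  rw [hre]
  have hLI : LinearIndependent ℝ (fun x : Fin d => toE (H x)) := rows_li H hH
  have hker : LinearMap.ker πL = V := by
    rw [hπdef, LinearMap.ker_comp, Submodule.ker_subtype, Submodule.comap_bot]
    have h1 : LinearMap.ker (Submodule.orthogonalProjectionOnto Vᗮ).toLinearMap = Vᗮᗮ :=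
      Submodule.ker_orthogonalProjectionOnto
    rw [h1, Submodule.orthogonal_orthogonal]
  have hπ0 : ∀ j ∈ P, πL (toE (H j)) = 0 := by
    intro j hj
    have hv : toE (H j) ∈ V := Submodule.subset_span ⟨j, hj, rfl⟩
    rw [← hker] at hv
    exact hv
  set T : Set (Fin d) := barPa E i \ P with hT
  set T' : Finset (Fin d) := T.toFinset with hT'
  have hrow : ∀ k, πL (toE ((B k * H) i)) = ∑ j ∈ T', B k i j • πL (toE (H j)) := by
    intro k
    rw [row_eq, map_sum]
    simp only [_root_.map_smul]
    symm
    apply Finset.sum_subset (Finset.subset_univ _)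
    intro j _ hj
    have hj' : j ∉ T := by simpa [hT'] using hj
    by_cases hb : j ∈ barPa E i
    · have hjP : j ∈ P := by
        by_contra hcP
        exact hj' ⟨hb, hcP⟩
      rw [hπ0 j hjP, smul_zero]
    · have hz : B k i j = 0 := by
        by_contra hcz
        exact hb ((hsupp k i j).mp hcz)
      rw [hz, zero_smul]
  set φ : (Fin d → ℝ) →ₗ[ℝ] EuclideanSpace ℝ (Fin n) :=
    ∑ j ∈ T', (LinearMap.proj j).smulRight (πL (toE (H j))) with hφ
  have hφv : ∀ v : Fin d → ℝ, φ v = ∑ j ∈ T', v j • πL (toE (H j)) := by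
    intro v
    simp [hφ, LinearMap.sum_apply, LinearMap.smulRight_apply, LinearMap.proj_apply]
  have hφrow : ∀ k, πL (toE ((B k * H) i)) = φ (B k i) := fun k => by
    rw [hrow, hφv]
  have himg : (Set.range fun k : Fin K => πL (toE ((B k * H) i)))
      = φ '' (Set.range fun k => B k i) := by
    rw [← Set.range_comp]
    exact congrArg Set.range (funext fun k => hφrow k)
  rw [himg, ← Submodule.map_span]
  -- the span of the rows of the `B k` at `i` is the coordinate subspace of `barPa E i`
  set U := Submodule.span ℝ ((fun j => (Pi.single j 1 : Fin d → ℝ)) '' barPa E i) with hU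
  have hb_card : (barPa E i).ncard = (pa E i).ncard + 1 :=
    Set.ncard_insert_of_notMem hii (Set.toFinite _)
  have hrowU : Submodule.span ℝ (Set.range fun k => B k i) = U := by
    apply Submodule.eq_of_le_of_finrank_le
    · rw [Submodule.span_le]
      rintro _ ⟨k, rfl⟩
      have hv : B k i = ∑ j ∈ (barPa E i).toFinset, B k i j • (Pi.single j 1 : Fin d → ℝ) := by
        have h1 : ∀ j, B k i j • (Pi.single j 1 : Fin d → ℝ) = Pi.single j (B k i j) := by
          intro j
          funext a
          by_cases h : a = j <;> simp [Pi.single_apply, h]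
        simp_rw [h1]
        rw [eq_comm]
        calc ∑ j ∈ (barPa E i).toFinset, Pi.single j (B k i j)
            = ∑ j : Fin d, Pi.single j (B k i j) := by
              apply Finset.sum_subset (Finset.subset_univ _)
              intro j _ hj
              have hz : B k i j = 0 := by
                by_contra hcz
                exact (by simpa using hj : j ∉ barPa E i) ((hsupp k i j).mp hcz)
              rw [hz]
              simp
          _ = B k i := Finset.univ_sum_single _
      show B k i ∈ (U : Set (Fin d → ℝ))
      rw [hv]
      exact Submodule.sum_mem _ fun j hj =>
        Submodule.smul_mem _ _ (Submodule.subset_span ⟨j, by simpa using hj, rfl⟩)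
    · rw [hnd i, ← hb_card]
      have h2 : ((fun j => (Pi.single j 1 : Fin d → ℝ)) '' barPa E i)
          = (((barPa E i).toFinset.image (fun j => (Pi.single j 1 : Fin d → ℝ))) : Set (Fin d → ℝ)) := by
        rw [Finset.coe_image, Set.coe_toFinset]
      rw [hU, h2]
      calc Module.finrank ℝ (Submodule.span ℝ
            (((barPa E i).toFinset.image (fun j => (Pi.single j 1 : Fin d → ℝ))) : Set (Fin d → ℝ)))
          ≤ ((barPa E i).toFinset.image (fun j => (Pi.single j 1 : Fin d → ℝ))).card :=
            finrank_span_finset_le_card _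
        _ ≤ (barPa E i).toFinset.card := Finset.card_image_le
        _ = (barPa E i).ncard := (Set.ncard_eq_toFinset_card' _).symm
  rw [hrowU, hU, Submodule.map_span]
  have hφs : ∀ j, φ (Pi.single j 1) = if j ∈ T' then πL (toE (H j)) else 0 := by
    intro j
    rw [hφv]
    have h3 : ∀ x, (Pi.single j 1 : Fin d → ℝ) x • πL (toE (H x))
        = if x = j then πL (toE (H x)) else 0 := by
      intro x
      by_cases h : x = j <;> simp [Pi.single_apply, h]
    simp_rw [h3]
    rw [Finset.sum_ite_eq' T' j]
  have hspan2 : Submodule.span ℝ (φ '' ((fun j => (Pi.single j 1 : Fin d → ℝ)) '' barPa E i))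
      = Submodule.span ℝ ((fun j => πL (toE (H j))) '' T) := by
    apply le_antisymm
    · rw [Submodule.span_le]
      rintro _ ⟨_, ⟨j, hj, rfl⟩, rfl⟩
      rw [hφs j]
      by_cases h : j ∈ T'
      · simp only [if_pos h]
        exact Submodule.subset_span ⟨j, by simpa [hT'] using h, rfl⟩
      · simp only [if_neg h]
        exact Submodule.zero_mem _
    · rw [Submodule.span_le]
      rintro _ ⟨j, hj, rfl⟩
      have hj' : j ∈ T' := by simpa [hT'] using hj
      have hjb : j ∈ barPa E i := hj.1
      have h4 := hφs j
      rw [if_pos hj'] at h4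
      exact Submodule.subset_span ⟨Pi.single j 1, ⟨j, hjb, rfl⟩, h4⟩
  rw [hspan2]
  have hTind : LinearIndependent ℝ (fun x : T => πL (toE (H (x : Fin d)))) := by
    have h1 : LinearIndependent ℝ (fun x : T => toE (H (x : Fin d))) :=
      hLI.comp _ Subtype.val_injective
    apply h1.map
    rw [hker]
    have h5 : Set.range (fun x : T => toE (H (x : Fin d)))
        = (fun x : Fin d => toE (H x)) '' T := (Set.image_eq_range (fun x : Fin d => toE (H x)) T).symm
    rw [h5, hVdef]
    exact hLI.disjoint_span_image Set.disjoint_sdiff_left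
  have himg2 : (fun j => πL (toE (H j))) '' T
      = Set.range (fun x : T => πL (toE (H (x : Fin d)))) := Set.image_eq_range _ _
  rw [himg2, finrank_span_eq_card hTind, Set.ncard_eq_toFinset_card', Set.toFinset_card]

theorem identify_parents_correct
    {d n K m : ℕ} (hn : d ≤ n)
    (E : Fin d → Fin d → Prop) (hG : IsDAG E)
    (H : Matrix (Fin d) (Fin n) ℝ) (hH : H.rank = d)
    (B : Fin K → Matrix (Fin d) (Fin d) ℝ)
    (hsupp : ∀ k, SupportMatches E (B k))
    (hnd : NodeNonDegenerate E B)
    (s : Fin m → Fin d) (hinj : Function.Injective s)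
    (hanc : ∀ m' : ℕ, m' ≤ m → Ancestral E (prefixSet s m'))
    (i : Fin d) (hi : i ∉ Set.range s) (hpa : pa E i ⊆ Set.range s)
    (r : ℕ → ℕ)
    (hr : ∀ m' : ℕ, r m' = Module.finrank ℝ (Submodule.span ℝ (Set.range fun k : Fin K =>
        projPerp (Submodule.span ℝ ((fun x => toE ((B k * H) x)) '' prefixSet s m'))
          (toE ((B k * H) i))))) :
    (∀ m' : ℕ, m' ≤ m → r m' = (barPa E i \ prefixSet s m').ncard) ∧
    (∀ j : Fin m, s j ∈ pa E i ↔ r ((j : ℕ) + 1) + 1 = r (j : ℕ)) ∧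
    {x | ∃ j : Fin m, s j = x ∧ r ((j : ℕ) + 1) + 1 = r (j : ℕ)} = pa E i := by
  have hii : i ∉ pa E i := fun hE => hG i (Relation.TransGen.single hE)
  have part1 : ∀ m' : ℕ, m' ≤ m → r m' = (barPa E i \ prefixSet s m').ncard := by
    intro m' hm'
    rw [hr m']
    exact rank_formula hG hH hsupp hnd hanc hii hm'
  have part2 : ∀ j : Fin m, s j ∈ pa E i ↔ r ((j : ℕ) + 1) + 1 = r (j : ℕ) := by
    intro j
    have e1 : r (j : ℕ) = (barPa E i \ prefixSet s (j : ℕ)).ncard :=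
      part1 _ (le_of_lt j.isLt)
    have e2 : r ((j : ℕ) + 1) = (barPa E i \ prefixSet s ((j : ℕ) + 1)).ncard :=
      part1 _ j.isLt
    rw [prefixSet_succ s j.isLt] at e2
    have hsj : s (⟨(j : ℕ), j.isLt⟩ : Fin m) = s j := by congr 1
    rw [hsj] at e2
    set A := barPa E i \ prefixSet s (j : ℕ) with hA
    have hA2 : barPa E i \ insert (s j) (prefixSet s (j : ℕ)) = A \ {s j} := by
      rw [hA]
      ext x
      simp only [Set.mem_diff, Set.mem_insert_iff, Set.mem_singleton_iff]
      tauto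
    rw [hA2] at e2
    have hsjP : s j ∉ prefixSet s (j : ℕ) := by
      rintro ⟨j', hj', he⟩
      have : j' = j := hinj he
      subst this
      omega
    have hsji : s j ≠ i := fun h => hi ⟨j, h⟩
    constructor
    · intro hmem
      have hsjA : s j ∈ A := ⟨Or.inr hmem, hsjP⟩
      rw [e1, e2, Set.ncard_diff_singleton_of_mem hsjA]
      have h1 : 1 ≤ A.ncard := by
        rw [Nat.one_le_iff_ne_zero]
        intro h0
        rw [Set.ncard_eq_zero (Set.toFinite _)] at h0
        rw [h0] at hsjA
        exact hsjA
      omega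
    · intro hcond
      by_contra hns
      have hsjA : s j ∉ A := by
        rintro ⟨hb, -⟩
        rcases hb with h | h
        · exact hsji h
        · exact hns h
      have : A \ {s j} = A := Set.diff_singleton_eq_self hsjA
      rw [this, ← e1] at e2
      omega
  refine ⟨part1, part2, ?_⟩
  ext x
  simp only [Set.mem_setOf_eq]
  constructor
  · rintro ⟨j, rfl, hcond⟩
    exact (part2 j).mpr hcond
  · intro hx
    obtain ⟨j, rfl⟩ := hpa hx
    exact ⟨j, rfl, (part2 j).mp hx⟩
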